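/- Let 𝓗 be a connected hypergraph on H equipped with a total order on H, and let μ ∈ ℝ^H be any vector with strictly decreasing coordinates, i.e., μ_x > μ_y whenever x < y in H. Then for any two distinct constructions S and T of 𝓗 that are joined by an edge, ⟨μ, v^S⟩ ≠ ⟨μ, v^T⟩; that is, μ is not perpendicular to v^S − v^T, so μ is an orientation vector for the Postnikov realization of the nestohedron of 𝓗. -/

import Mathlib

open scoped Classical

noncomputable section

/-! ## Hypergraphs (nestohedra combinatorics), after Curien–Laplante-Anfossi:
hypergraphs, restrictions, connectivity, saturation, reconnected restriction,
constructs/constructions, the face order, the flip rewriting, and terms over the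
associated signatures. -/

/-- A hypergraph on a finite vertex set: a finite set of nonempty hyperedges whose union is
the vertex set, assumed atomic (every singleton is a hyperedge). -/
structure NHypergraph (α : Type*) [DecidableEq α] where
  verts : Finset α
  edges : Finset (Finset α)
  edges_nonempty : ∀ e ∈ edges, e.Nonempty
  edges_subset : ∀ e ∈ edges, e ⊆ verts
  atomic : ∀ v ∈ verts, {v} ∈ edges

namespace NHypergraph

variable {α : Type*} [DecidableEq α]

/-- The plain restriction `𝓗_X` of a hypergraph to a subset `X` of its vertices. -/
def restrict (H : NHypergraph α) (X : Finset α) : NHypergraph α where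
  verts := X ∩ H.verts
  edges := H.edges.filter (· ⊆ X)
  edges_nonempty e he := H.edges_nonempty e (Finset.mem_filter.mp he).1
  edges_subset e he :=
    Finset.subset_inter (Finset.mem_filter.mp he).2 (H.edges_subset e (Finset.mem_filter.mp he).1)
  atomic v hv := by
    rcases Finset.mem_inter.mp hv with ⟨h1, h2⟩
    exact Finset.mem_filter.mpr ⟨H.atomic v h2, Finset.singleton_subset_iff.mpr h1⟩

/-- A hypergraph is connected if its vertex set is nonempty and admits no nontrivial
partition `X₁ ∪ X₂` such that every edge lies in `X₁` or in `X₂`. -/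
def Connected (H : NHypergraph α) : Prop :=
  H.verts.Nonempty ∧ ∀ X₁ X₂ : Finset α, X₁.Nonempty → X₂.Nonempty →
    Disjoint X₁ X₂ → X₁ ∪ X₂ = H.verts → ∃ e ∈ H.edges, ¬e ⊆ X₁ ∧ ¬e ⊆ X₂

/-- `C` is (the vertex set of) a connected component of `H`: a maximal connected subset. -/
def IsComponent (H : NHypergraph α) (C : Finset α) : Prop :=
  C ⊆ H.verts ∧ (H.restrict C).Connected ∧
    ∀ D : Finset α, C ⊆ D → D ⊆ H.verts → (H.restrict D).Connected → D = C

/-- `y` and `z` lie in the same connected component of `H`. -/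
def SameComponent (H : NHypergraph α) (y z : α) : Prop :=
  ∃ C : Finset α, H.IsComponent C ∧ y ∈ C ∧ z ∈ C

/-- The saturation `Sat(𝓗)`: the set of (nonempty) connected subsets of vertices. -/
def sat (H : NHypergraph α) : Finset (Finset α) :=
  H.verts.powerset.filter fun X => (H.restrict X).Connected

theorem singleton_connected (H : NHypergraph α) {v : α} (hv : v ∈ H.verts) :
    (H.restrict {v}).Connected := by
  constructor
  · exact ⟨v, Finset.mem_inter.mpr ⟨Finset.mem_singleton_self v, hv⟩⟩
  · intro X₁ X₂ h₁ h₂ hd hu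
    exfalso
    have hv' : ({v} : Finset α) ∩ H.verts = {v} :=
      Finset.inter_eq_left.mpr (Finset.singleton_subset_iff.mpr hv)
    have hu' : X₁ ∪ X₂ = ({v} : Finset α) := hu.trans hv'
    have hX₁ : X₁ ⊆ {v} := hu' ▸ Finset.subset_union_left
    have hX₂ : X₂ ⊆ {v} := hu' ▸ Finset.subset_union_right
    obtain ⟨a, ha⟩ := h₁
    obtain ⟨b, hb⟩ := h₂
    have ha' := Finset.mem_singleton.mp (hX₁ ha)
    have hb' := Finset.mem_singleton.mp (hX₂ hb)
    subst ha'; exact Finset.disjoint_left.mp hd ha (hb' ▸ hb)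

/-- The reconnected restriction `𝓗 ↾ X` of `𝓗` to `X`. -/
def reconRestrict (H : NHypergraph α) (X : Finset α) : NHypergraph α where
  verts := X ∩ H.verts
  edges := (H.sat.image (· ∩ X)).filter (·.Nonempty)
  edges_nonempty e he := (Finset.mem_filter.mp he).2
  edges_subset := by
    intro e he
    rcases Finset.mem_image.mp (Finset.mem_filter.mp he).1 with ⟨Z, hZ, rfl⟩
    have hZv : Z ⊆ H.verts := Finset.mem_powerset.mp (Finset.mem_filter.mp hZ).1
    exact fun a ha => Finset.mem_inter.mpr
      ⟨(Finset.mem_inter.mp ha).2, hZv (Finset.mem_inter.mp ha).1⟩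
  atomic := by
    intro v hv
    rcases Finset.mem_inter.mp hv with ⟨h1, h2⟩
    refine Finset.mem_filter.mpr ⟨Finset.mem_image.mpr ⟨{v}, ?_, ?_⟩, ?_⟩
    · exact Finset.mem_filter.mpr
        ⟨Finset.mem_powerset.mpr (Finset.singleton_subset_iff.mpr h2),
         H.singleton_connected h2⟩
    · exact Finset.inter_eq_left.mpr (Finset.singleton_subset_iff.mpr h1)
    · exact ⟨v, by simp [Finset.inter_eq_left.mpr (Finset.singleton_subset_iff.mpr h1)]⟩

/-- `x ⇝ {y,z}` in `𝓗`: after removing `x`, the vertices `y` and `z` lie in the same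
connected component.  Its negation is "`x` disconnects `y` and `z` in `𝓗`". -/
def Links (H : NHypergraph α) (x y z : α) : Prop :=
  (H.restrict (H.verts \ {x})).SameComponent y z

/-- A hypergraph is contextual if for every connected subset `Y` of cardinality at least 3
and all distinct `x, y, z ∈ Y`, `x` disconnects `y` and `z` in `𝓗_Y` iff it does in `𝓗`. -/
def Contextual (H : NHypergraph α) : Prop :=
  ∀ Y : Finset α, Y ⊆ H.verts → (H.restrict Y).Connected → 3 ≤ Y.card →
    ∀ x y z : α, x ∈ Y → y ∈ Y → z ∈ Y → x ≠ y → y ≠ z → x ≠ z →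
      ((H.restrict Y).Links x y z ↔ H.Links x y z)

end NHypergraph

/-- Finite rooted trees with nodes decorated by finite sets (potential constructs). -/
inductive FTree (α : Type*) : Type _ where
  | node : Finset α → List (FTree α) → FTree α

namespace FTree

variable {α : Type*} [DecidableEq α]

/-- The decoration of the root node. -/
def label : FTree α → Finset α
  | node Y _ => Y

/-- The list of children of the root node. -/
def children : FTree α → List (FTree α)
  | node _ ts => ts

/-- The support of a tree: the union of the decorations of its nodes. -/
def support : FTree α → Finset α
  | node Y [] => Y
  | node Y (t :: ts) => support t ∪ support (node Y ts)

/-- The list of decorations of the nodes of a tree. -/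
def labels : FTree α → List (Finset α)
  | node Y [] => [Y]
  | node Y (t :: ts) => labels t ++ labels (node Y ts)

/-- The dimension of a construct: the sum over its nodes `X` of `|X| - 1`. -/
def dim (T : FTree α) : ℕ := (T.labels.map fun X => X.card - 1).sum

mutual
  /-- The (full) subtree rooted at the node decorated by `X`, if any. -/
  def subtreeAt : FTree α → Finset α → Option (FTree α)
    | node Y ts, X => if Y = X then some (node Y ts) else subtreeAtList ts X
  def subtreeAtList : List (FTree α) → Finset α → Option (FTree α)
    | [], _ => none
    | t :: ts, X => (subtreeAt t X).elim (subtreeAtList ts X) some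
end

/-- The support `supp (T ↾ X)` of the subtree rooted at the node decorated by `X`
(or `∅` if there is no such node). -/
def suppAt (T : FTree α) (X : Finset α) : Finset α :=
  ((T.subtreeAt X).map support).getD ∅

mutual
  /-- The list of supports of the subtrees rooted at the nodes of `T` (its nested set). -/
  def nests : FTree α → List (Finset α)
    | node Y ts => support (node Y ts) :: nestsList ts
  def nestsList : List (FTree α) → List (Finset α)
    | [] => []
    | t :: ts => nests t ++ nestsList ts
end

/-- The nested set of a tree, as a finite set. -/
def nestSet (T : FTree α) : Finset (Finset α) := T.nests.toFinset

/-- `S ≺ T` (`S` is covered by `T`) in the face order: `T` is obtained from `S` by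
contracting one edge between a node and its father (equivalently, the nested set of `T`
is obtained from that of `S` by removing one non-root element). -/
def CoveredBy (S T : FTree α) : Prop :=
  ∃ N ∈ S.nests, N ≠ S.support ∧ T.nestSet = S.nestSet.erase N

/-- The face (subface) order `S ≼ T` on constructs: the reflexive–transitive closure of
the covering relation `≺`. -/
def FaceLe (S T : FTree α) : Prop := Relation.ReflTransGen CoveredBy S T

/-- `IsSubtree S T`: `S` is a (full) subtree of `T`. -/
inductive IsSubtree : FTree α → FTree α → Prop
  | refl (t : FTree α) : IsSubtree t t
  | child {s t u : FTree α} : IsSubtree s t → t ∈ u.children → IsSubtree s u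

/-- In `T`, the node decorated by `X` has a child decorated by `Y`. -/
def ParentChild (X Y : Finset α) (T : FTree α) : Prop :=
  ∃ R : FTree α, IsSubtree R T ∧ R.label = X ∧ ∃ t ∈ R.children, t.label = Y

mutual
  /-- Pruning: remove all (subtrees rooted at) nodes whose decoration is not a subset
  of `X`, keeping the root. -/
  def prune (X : Finset α) : FTree α → FTree α
    | node Y ts => node Y (pruneList X ts)
  def pruneList (X : Finset α) : List (FTree α) → List (FTree α)
    | [] => []
    | t :: ts => if t.label ⊆ X then prune X t :: pruneList X ts else pruneList X ts
end

end FTree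

/-- `IsConstruct H T`: the tree `T` is a construct of the hypergraph `H`: its root `Y` is a
nonempty subset of the vertices, its children are constructs of the connected components of
`𝓗 ∖ Y` (one for each component, listed by increasing maximal vertex). -/
inductive IsConstruct {α : Type*} [LinearOrder α] : NHypergraph α → FTree α → Prop
  | node {H : NHypergraph α} (Y : Finset α) (ts : List (FTree α))
      (hY : Y.Nonempty) (hYsub : Y ⊆ H.verts)
      (hmem : ∀ t ∈ ts, (H.restrict (H.verts \ Y)).IsComponent t.support)
      (hcover : ∀ C : Finset α, (H.restrict (H.verts \ Y)).IsComponent C →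
        ∃ t ∈ ts, t.support = C)
      (hsorted : ts.Pairwise fun a b => a.support.max < b.support.max)
      (hchild : ∀ t ∈ ts, IsConstruct (H.restrict t.support) t) :
      IsConstruct H (FTree.node Y ts)

section ConstructionOrder

variable {α : Type*} [LinearOrder α]

/-- A construction: a construct all of whose nodes are singletons (a vertex of the
nestohedron). -/
def IsConstruction (H : NHypergraph α) (T : FTree α) : Prop :=
  IsConstruct H T ∧ ∀ X ∈ T.labels, X.card = 1

/-- An `X`-face: a 2-dimensional construct whose unique non-singleton node is decorated
by `X`, of cardinality 3. -/
def IsXFace (H : NHypergraph α) (X : Finset α) (T : FTree α) : Prop :=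
  IsConstruct H T ∧ X.card = 3 ∧ X ∈ T.labels ∧ ∀ Y ∈ T.labels, Y ≠ X → Y.card = 1

/-- Two distinct constructions are joined by an edge of the nestohedron: both are covered
by a common 1-dimensional construct. -/
def EdgeJoined (H : NHypergraph α) (S T : FTree α) : Prop :=
  IsConstruction H S ∧ IsConstruction H T ∧ S ≠ T ∧
  ∃ V : FTree α, IsConstruct H V ∧ V.dim = 1 ∧ FTree.CoveredBy S V ∧ FTree.CoveredBy T V

/-- The flip rewriting relation `S → T` on constructions of an ordered hypergraph:
`S` and `T` are the two endpoints of an edge whose 1-dimensional face has unique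
non-singleton node `{x, y}` with `x < y`, and in `S` the node `{x}` is the parent of the
node `{y}`. -/
def Flip (H : NHypergraph α) (S T : FTree α) : Prop :=
  IsConstruction H S ∧ IsConstruction H T ∧ S ≠ T ∧
  ∃ (V : FTree α) (x y : α), IsConstruct H V ∧ V.dim = 1 ∧ x ≠ y ∧
    ({x, y} : Finset α) ∈ V.labels ∧ FTree.CoveredBy S V ∧ FTree.CoveredBy T V ∧
    FTree.ParentChild ({x} : Finset α) ({y} : Finset α) S ∧ x < y

/-- The coordinate vector of a construction `S` of `H`:
`v^S_x = |{e ∈ Sat(𝓗) : x ∈ e ⊆ supp (S ↾ x)}|`. -/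
def coordVec (H : NHypergraph α) (S : FTree α) (x : α) : ℕ :=
  (H.sat.filter fun e => x ∈ e ∧ e ⊆ S.suppAt {x}).card

end ConstructionOrder

/-- Raw terms over the signature `Σ_𝓗` (and `Σ^c_𝓗`): variables are (connected) subsets,
function symbols are pairs `(X, Y)` of subsets, applied to a list of arguments. -/
inductive HTerm (α : Type*) : Type _ where
  | var : Finset α → HTerm α
  | app : Finset α → Finset α → List (HTerm α) → HTerm α

namespace HTerm

variable {α : Type*} [DecidableEq α]

/-- The (output) sort of a term. -/
def sortOf : HTerm α → Finset α
  | var A => A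
  | app _ Y _ => Y

/-- The list of variables occurring in a term. -/
def varsList : HTerm α → List (Finset α)
  | var A => [A]
  | app _ _ [] => []
  | app X Y (t :: ts) => varsList t ++ varsList (app X Y ts)

/-- The list of first components of the function symbols occurring in a term. -/
def appFirsts : HTerm α → List (Finset α)
  | var _ => []
  | app X _ [] => [X]
  | app X Y (t :: ts) => appFirsts t ++ appFirsts (app X Y ts)

/-- A term is closed if it contains no variables. -/
def Closed (t : HTerm α) : Prop := t.varsList = []

/-- The union `⋃ var(t)` of the variables of a term. -/
def varsUnion (t : HTerm α) : Finset α := t.varsList.foldr (· ∪ ·) ∅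

mutual
  /-- Projection of a term to a decorated tree: every function symbol `(X, Y)` is sent to
  its first component `X`, and all variables are pruned. -/
  def toTree : HTerm α → FTree α
    | .var A => .node A []
    | .app X _ ts => .node X (toTreeList ts)
  def toTreeList : List (HTerm α) → List (FTree α)
    | [] => []
    | .var _ :: ts => toTreeList ts
    | t :: ts => toTree t :: toTreeList ts
end

end HTerm

/-- Well-formed terms over the signature `Σ_𝓗` associated with the hypergraph `H`:
a variable is a connected subset (its own sort); a function symbol `(X, Y)` (with
`∅ ≠ X ⊆ Y ⊆ H` and `Y` connected) is applied to arguments whose sorts are exactly the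
connected components of `𝓗_Y ∖ X`, listed by increasing maximal vertex. -/
inductive IsTerm {α : Type*} [LinearOrder α] (H : NHypergraph α) : HTerm α → Prop
  | var (A : Finset α) : A ⊆ H.verts → (H.restrict A).Connected → IsTerm H (.var A)
  | app (X Y : Finset α) (ts : List (HTerm α)) :
      X.Nonempty → X ⊆ Y → Y ⊆ H.verts → (H.restrict Y).Connected →
      (∀ t ∈ ts, (H.restrict (Y \ X)).IsComponent t.sortOf) →
      (∀ C : Finset α, (H.restrict (Y \ X)).IsComponent C → ∃ t ∈ ts, t.sortOf = C) →
      ts.Pairwise (fun a b => a.sortOf.max < b.sortOf.max) →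
      (∀ t ∈ ts, IsTerm H t) →
      IsTerm H (.app X Y ts)


/-! ### Auxiliary lemmas -/

namespace NHypergraph

variable {α : Type*} [DecidableEq α]

theorem hext {H₁ H₂ : NHypergraph α} (hv : H₁.verts = H₂.verts)
    (he : H₁.edges = H₂.edges) : H₁ = H₂ := by
  cases H₁; cases H₂; simp_all

@[simp] theorem restrict_verts (H : NHypergraph α) (X : Finset α) :
    (H.restrict X).verts = X ∩ H.verts := rfl

theorem mem_restrict_edges {H : NHypergraph α} {X e : Finset α} :
    e ∈ (H.restrict X).edges ↔ e ∈ H.edges ∧ e ⊆ X := Finset.mem_filter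

theorem restrict_restrict (H : NHypergraph α) {A B : Finset α} (hBA : B ⊆ A) :
    (H.restrict A).restrict B = H.restrict B := by
  refine hext ?_ ?_
  · simp only [restrict_verts, ← Finset.inter_assoc, Finset.inter_eq_left.mpr hBA]
  · ext e
    simp only [mem_restrict_edges]
    exact ⟨fun h => ⟨h.1.1, h.2⟩, fun h => ⟨⟨h.1, h.2.trans hBA⟩, h.2⟩⟩

theorem restrict_self (H : NHypergraph α) : H.restrict H.verts = H := by
  refine hext ?_ ?_
  · simp
  · ext e
    simp only [mem_restrict_edges]
    exact ⟨fun h => h.1, fun h => ⟨h, H.edges_subset e h⟩⟩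

theorem union_connected {G : NHypergraph α} {C D : Finset α} (hC : C ⊆ G.verts)
    (hD : D ⊆ G.verts) (hCc : (G.restrict C).Connected) (hDc : (G.restrict D).Connected)
    (hmeet : (C ∩ D).Nonempty) : (G.restrict (C ∪ D)).Connected := by
  have hvC : (G.restrict C).verts = C := by simp [Finset.inter_eq_left.mpr hC]
  have hvD : (G.restrict D).verts = D := by simp [Finset.inter_eq_left.mpr hD]
  have hvCD : (G.restrict (C ∪ D)).verts = C ∪ D := by
    simp [Finset.inter_eq_left.mpr (Finset.union_subset hC hD)]
  constructor
  · rw [hvCD]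
    obtain ⟨p, hp⟩ := hmeet
    exact ⟨p, Finset.mem_union_left _ (Finset.mem_inter.mp hp).1⟩
  · intro X₁ X₂ h₁ h₂ hd hu
    rw [hvCD] at hu
    -- either one side of the partition splits C, or it splits D, or C, D lie on opposite sides
    by_cases hsplitC : (X₁ ∩ C).Nonempty ∧ (X₂ ∩ C).Nonempty
    · obtain ⟨e, he, he₁, he₂⟩ := hCc.2 (X₁ ∩ C) (X₂ ∩ C) hsplitC.1 hsplitC.2
        (hd.mono Finset.inter_subset_left Finset.inter_subset_left)
        (by rw [hvC, ← Finset.union_inter_distrib_right, hu,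
              Finset.inter_eq_right.mpr Finset.subset_union_left])
      rw [mem_restrict_edges] at he
      refine ⟨e, mem_restrict_edges.mpr ⟨he.1, he.2.trans Finset.subset_union_left⟩, ?_, ?_⟩
      · exact fun h => he₁ (Finset.subset_inter h he.2)
      · exact fun h => he₂ (Finset.subset_inter h he.2)
    · by_cases hsplitD : (X₁ ∩ D).Nonempty ∧ (X₂ ∩ D).Nonempty
      · obtain ⟨e, he, he₁, he₂⟩ := hDc.2 (X₁ ∩ D) (X₂ ∩ D) hsplitD.1 hsplitD.2
          (hd.mono Finset.inter_subset_left Finset.inter_subset_left)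
          (by rw [hvD, ← Finset.union_inter_distrib_right, hu,
                Finset.inter_eq_right.mpr Finset.subset_union_right])
        rw [mem_restrict_edges] at he
        refine ⟨e, mem_restrict_edges.mpr ⟨he.1, he.2.trans Finset.subset_union_right⟩, ?_, ?_⟩
        · exact fun h => he₁ (Finset.subset_inter h he.2)
        · exact fun h => he₂ (Finset.subset_inter h he.2)
      · exfalso
        -- C entirely in one side, D entirely in one side
        have hCside : C ⊆ X₁ ∨ C ⊆ X₂ := by
          rcases Finset.eq_empty_or_nonempty (X₁ ∩ C) with h | h
          · right; intro a ha
            have : a ∈ X₁ ∪ X₂ := hu ▸ Finset.mem_union_left _ ha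
            rcases Finset.mem_union.mp this with h' | h'
            · exact absurd (Finset.mem_inter.mpr ⟨h', ha⟩) (by simp [h])
            · exact h'
          rcases Finset.eq_empty_or_nonempty (X₂ ∩ C) with h2 | h2
          · left; intro a ha
            have : a ∈ X₁ ∪ X₂ := hu ▸ Finset.mem_union_left _ ha
            rcases Finset.mem_union.mp this with h' | h'
            · exact h'
            · exact absurd (Finset.mem_inter.mpr ⟨h', ha⟩) (by simp [h2])
          · exact absurd ⟨h, h2⟩ hsplitC
        have hDside : D ⊆ X₁ ∨ D ⊆ X₂ := by
          rcases Finset.eq_empty_or_nonempty (X₁ ∩ D) with h | h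
          · right; intro a ha
            have : a ∈ X₁ ∪ X₂ := hu ▸ Finset.mem_union_right _ ha
            rcases Finset.mem_union.mp this with h' | h'
            · exact absurd (Finset.mem_inter.mpr ⟨h', ha⟩) (by simp [h])
            · exact h'
          rcases Finset.eq_empty_or_nonempty (X₂ ∩ D) with h2 | h2
          · left; intro a ha
            have : a ∈ X₁ ∪ X₂ := hu ▸ Finset.mem_union_right _ ha
            rcases Finset.mem_union.mp this with h' | h'
            · exact h'
            · exact absurd (Finset.mem_inter.mpr ⟨h', ha⟩) (by simp [h2])
          · exact absurd ⟨h, h2⟩ hsplitD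
        obtain ⟨p, hp⟩ := hmeet
        rcases Finset.mem_inter.mp hp with ⟨hpC, hpD⟩
        rcases hCside with hC1 | hC1 <;> rcases hDside with hD1 | hD1
        · obtain ⟨q, hq⟩ := h₂
          have : q ∈ C ∪ D := hu ▸ Finset.mem_union_right _ hq
          rcases Finset.mem_union.mp this with h' | h'
          · exact Finset.disjoint_left.mp hd (hC1 h') hq
          · exact Finset.disjoint_left.mp hd (hD1 h') hq
        · exact Finset.disjoint_left.mp hd (hC1 hpC) (hD1 hpD)
        · exact Finset.disjoint_left.mp hd (hD1 hpD) (hC1 hpC)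
        · obtain ⟨q, hq⟩ := h₁
          have : q ∈ C ∪ D := hu ▸ Finset.mem_union_left _ hq
          rcases Finset.mem_union.mp this with h' | h'
          · exact Finset.disjoint_left.mp hd hq (hC1 h')
          · exact Finset.disjoint_left.mp hd hq (hD1 h')

theorem comp_exists (G : NHypergraph α) {v : α} (hv : v ∈ G.verts) :
    ∃ C, G.IsComponent C ∧ v ∈ C := by
  classical
  set F := G.verts.powerset.filter (fun X => v ∈ X ∧ (G.restrict X).Connected) with hF
  have hne : F.Nonempty := by
    refine ⟨{v}, Finset.mem_filter.mpr ⟨Finset.mem_powerset.mpr ?_, Finset.mem_singleton_self v,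
      G.singleton_connected hv⟩⟩
    exact Finset.singleton_subset_iff.mpr hv
  obtain ⟨C, hCF, hmax⟩ := F.exists_max_image Finset.card hne
  rw [hF, Finset.mem_filter, Finset.mem_powerset] at hCF
  refine ⟨C, ⟨hCF.1, hCF.2.2, ?_⟩, hCF.2.1⟩
  intro D hCD hDv hDc
  have hDF : D ∈ F := Finset.mem_filter.mpr ⟨Finset.mem_powerset.mpr hDv, hCD hCF.2.1, hDc⟩
  exact (Finset.eq_of_subset_of_card_le hCD (hmax D hDF)).symm

theorem connected_subset_component {G : NHypergraph α} {C Z : Finset α}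
    (hC : G.IsComponent C) (hZ : Z ⊆ G.verts) (hZc : (G.restrict Z).Connected)
    (hmeet : (Z ∩ C).Nonempty) : Z ⊆ C := by
  have hu := union_connected hC.1 hZ hC.2.1 hZc (by rwa [Finset.inter_comm])
  have := hC.2.2 (C ∪ Z) Finset.subset_union_left (Finset.union_subset hC.1 hZ) hu
  rw [← this]
  exact Finset.subset_union_right

theorem comp_unique {G : NHypergraph α} {C D : Finset α} (hC : G.IsComponent C)
    (hD : G.IsComponent D) (hmeet : (C ∩ D).Nonempty) : C = D := by
  have h1 : C ⊆ D := connected_subset_component hD hC.1 hC.2.1 hmeet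
  have h2 : D ⊆ C := connected_subset_component hC hD.1 hD.2.1 (by rwa [Finset.inter_comm])
  exact Finset.Subset.antisymm h1 h2

theorem mem_sat {H : NHypergraph α} {e : Finset α} :
    e ∈ H.sat ↔ e ⊆ H.verts ∧ (H.restrict e).Connected := by
  simp [sat, Finset.mem_filter, Finset.mem_powerset]

end NHypergraph

namespace FTree

variable {α : Type*} [DecidableEq α]

theorem mem_support_node {Y : Finset α} {ts : List (FTree α)} {a : α} :
    a ∈ (FTree.node Y ts).support ↔ a ∈ Y ∨ ∃ t ∈ ts, a ∈ t.support := by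
  induction ts with
  | nil => simp [support]
  | cons t ts ih => rw [support]; simp only [Finset.mem_union, ih]; simp; tauto

theorem mem_labels_node {Y : Finset α} {ts : List (FTree α)} {L : Finset α} :
    L ∈ (FTree.node Y ts).labels ↔ L = Y ∨ ∃ t ∈ ts, L ∈ t.labels := by
  induction ts with
  | nil => simp [labels]
  | cons t ts ih => rw [labels]; simp only [List.mem_append, ih]; simp; tauto

theorem mem_nestsList {ts : List (FTree α)} {N : Finset α} :
    N ∈ FTree.nestsList ts ↔ ∃ t ∈ ts, N ∈ t.nests := by
  induction ts with
  | nil => simp [nestsList]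
  | cons t ts ih => rw [nestsList]; simp only [List.mem_append, ih]; simp

theorem mem_nests_node {Y : Finset α} {ts : List (FTree α)} {N : Finset α} :
    N ∈ (FTree.node Y ts).nests ↔
      N = (FTree.node Y ts).support ∨ ∃ t ∈ ts, N ∈ t.nests := by
  rw [nests]; simp [mem_nestsList]

theorem support_mem_nests (T : FTree α) : T.support ∈ T.nests := by
  cases T with
  | node Y ts => rw [nests]; exact List.mem_cons_self

theorem subtreeAtList_eq_none {ts : List (FTree α)} {X : Finset α}
    (h : ∀ t ∈ ts, FTree.subtreeAt t X = none) : FTree.subtreeAtList ts X = none := by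
  induction ts with
  | nil => rw [subtreeAtList]
  | cons t ts ih =>
    rw [subtreeAtList, h t (List.mem_cons_self)]
    exact ih fun t ht => h t (List.mem_cons_of_mem _ ht)

end FTree

section ConstructLemmas

variable {α : Type*} [LinearOrder α]

open NHypergraph

theorem comp_disjoint {G : NHypergraph α} {C D : Finset α} (hC : G.IsComponent C)
    (hD : G.IsComponent D) (hne : C ≠ D) : Disjoint C D := by
  by_contra hnd
  exact hne (comp_unique hC hD (Finset.not_disjoint_iff_nonempty_inter.mp hnd))

theorem children_disjoint {H : NHypergraph α} {Y : Finset α} {ts : List (FTree α)}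
    (h : IsConstruct H (FTree.node Y ts)) :
    ∀ t₁ ∈ ts, ∀ t₂ ∈ ts, t₁ ≠ t₂ → Disjoint t₁.support t₂.support := by
  cases h with
  | node _ _ hY hYsub hmem hcover hsorted hchild =>
    have hpw : ts.Pairwise (fun a b => Disjoint a.support b.support) := by
      refine List.Pairwise.imp_of_mem ?_ hsorted
      intro a b ha hb hab
      by_contra hnd
      rw [comp_unique (hmem a ha) (hmem b hb)
        (Finset.not_disjoint_iff_nonempty_inter.mp hnd)] at hab
      exact lt_irrefl _ hab
    intro t₁ h₁ t₂ h₂ hne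
    exact (haveI : Std.Symm (fun a b : FTree α => Disjoint a.support b.support) := ⟨fun a b h => h.symm⟩; hpw.forall h₁ h₂ hne)

theorem comp_subset_sdiff {H : NHypergraph α} {X C : Finset α}
    (h : (H.restrict X).IsComponent C) : C ⊆ X := h.1.trans Finset.inter_subset_left

theorem IsConstruct.support_eq {H : NHypergraph α} {S : FTree α} (h : IsConstruct H S) :
    S.support = H.verts := by
  cases h with
  | node Y ts hY hYsub hmem hcover hsorted hchild =>
    ext a
    rw [FTree.mem_support_node]
    constructor
    · rintro (ha | ⟨t, ht, ha⟩)
      · exact hYsub ha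
      · exact (Finset.mem_sdiff.mp (comp_subset_sdiff (hmem t ht) ha)).1
    · intro ha
      by_cases haY : a ∈ Y
      · exact Or.inl haY
      · obtain ⟨C, hC, haC⟩ := (H.restrict (H.verts \ Y)).comp_exists (v := a)
          (by simp [haY, ha])
        obtain ⟨t, ht, hts⟩ := hcover C hC
        exact Or.inr ⟨t, ht, hts ▸ haC⟩

theorem IsConstruct.labels_nonempty {H : NHypergraph α} {S : FTree α} (h : IsConstruct H S) :
    ∀ L ∈ S.labels, L.Nonempty := by
  induction h with
  | node Y ts hY hYsub hmem hcover hsorted hchild ih =>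
    intro L hL
    rcases FTree.mem_labels_node.mp hL with rfl | ⟨t, ht, hLt⟩
    · exact hY
    · exact ih t ht L hLt

theorem IsConstruct.labels_subset_support {H : NHypergraph α} {S : FTree α}
    (h : IsConstruct H S) : ∀ L ∈ S.labels, L ⊆ S.support := by
  induction h with
  | node Y ts hY hYsub hmem hcover hsorted hchild ih =>
    intro L hL
    rcases FTree.mem_labels_node.mp hL with rfl | ⟨t, ht, hLt⟩
    · exact fun a ha => FTree.mem_support_node.mpr (Or.inl ha)
    · exact fun a ha => FTree.mem_support_node.mpr (Or.inr ⟨t, ht, ih t ht L hLt ha⟩)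

theorem IsConstruct.nests_subset_support {H : NHypergraph α} {S : FTree α}
    (h : IsConstruct H S) : ∀ N ∈ S.nests, N ⊆ S.support := by
  induction h with
  | node Y ts hY hYsub hmem hcover hsorted hchild ih =>
    intro N hN
    rcases FTree.mem_nests_node.mp hN with rfl | ⟨t, ht, hNt⟩
    · exact Finset.Subset.refl _
    · exact fun a ha =>
        FTree.mem_support_node.mpr (Or.inr ⟨t, ht, ih t ht N hNt ha⟩)

theorem IsConstruct.support_nonempty {H : NHypergraph α} {S : FTree α}
    (h : IsConstruct H S) : S.support.Nonempty := by
  cases h with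
  | node Y ts hY hYsub hmem hcover hsorted hchild =>
    obtain ⟨a, ha⟩ := hY
    exact ⟨a, FTree.mem_support_node.mpr (Or.inl ha)⟩

theorem IsConstruct.nests_nonempty {H : NHypergraph α} {S : FTree α}
    (h : IsConstruct H S) : ∀ N ∈ S.nests, N.Nonempty := by
  induction h with
  | node Y ts hY hYsub hmem hcover hsorted hchild ih =>
    intro N hN
    rcases FTree.mem_nests_node.mp hN with rfl | ⟨t, ht, hNt⟩
    · exact (IsConstruct.node Y ts hY hYsub hmem hcover hsorted hchild).support_nonempty
    · exact ih t ht N hNt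

theorem IsConstruct.child_construct {H : NHypergraph α} {Y : Finset α} {ts : List (FTree α)}
    (h : IsConstruct H (FTree.node Y ts)) :
    ∀ t ∈ ts, IsConstruct (H.restrict t.support) t := by
  cases h with
  | node _ _ hY hYsub hmem hcover hsorted hchild => exact hchild

theorem IsConstruct.child_connected {H : NHypergraph α} {Y : Finset α} {ts : List (FTree α)}
    (h : IsConstruct H (FTree.node Y ts)) :
    ∀ t ∈ ts, t.support ⊆ H.verts \ Y ∧ (H.restrict t.support).Connected := by
  cases h with
  | node _ _ hY hYsub hmem hcover hsorted hchild =>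
    intro t ht
    have hsub : t.support ⊆ H.verts \ Y := comp_subset_sdiff (hmem t ht)
    have hconn := (hmem t ht).2.1
    rw [restrict_restrict _ hsub] at hconn
    exact ⟨hsub, hconn⟩

theorem IsConstruct.nests_subset_verts {H : NHypergraph α} {S : FTree α}
    (h : IsConstruct H S) : ∀ N ∈ S.nests, N ⊆ H.verts :=
  fun N hN => h.support_eq ▸ h.nests_subset_support N hN

theorem IsConstruct.nests_connected {H : NHypergraph α} {S : FTree α}
    (h : IsConstruct H S) (hc : H.Connected) :
    ∀ N ∈ S.nests, (H.restrict N).Connected := by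
  induction h with
  | node Y ts hY hYsub hmem hcover hsorted hchild ih =>
    intro N hN
    have hcon := IsConstruct.node Y ts hY hYsub hmem hcover hsorted hchild
    rcases FTree.mem_nests_node.mp hN with rfl | ⟨t, ht, hNt⟩
    · rw [hcon.support_eq, restrict_self]; exact hc
    · have hconn := (hcon.child_connected t ht).2
      have := ih t ht hconn N hNt
      rwa [restrict_restrict _ ((hchild t ht).nests_subset_support N hNt)] at this

theorem IsConstruct.subtreeAt_eq_none {H : NHypergraph α} {S : FTree α}
    (h : IsConstruct H S) {X : Finset α} (hX : X ∉ S.labels) : S.subtreeAt X = none := by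
  induction h with
  | node Y ts hY hYsub hmem hcover hsorted hchild ih =>
    have hYX : ¬(Y = X) := fun h' => hX (FTree.mem_labels_node.mpr (Or.inl h'.symm))
    rw [FTree.subtreeAt, if_neg hYX]
    exact FTree.subtreeAtList_eq_none fun t ht =>
      ih t ht fun hL => hX (FTree.mem_labels_node.mpr (Or.inr ⟨t, ht, hL⟩))

end ConstructLemmas

section MinNest

variable {α : Type*} [LinearOrder α]

open NHypergraph

theorem IsConstruct.minNest {H : NHypergraph α} {S : FTree α} (h : IsConstruct H S)
    {w : α} (hw : w ∈ S.support) :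
    ∃ (L : Finset α) (cs : List (FTree α)),
      (∀ N ∈ (FTree.node L cs).nests, N ∈ S.nests) ∧
      L ∈ S.labels ∧ w ∈ L ∧
      IsConstruct (H.restrict (FTree.node L cs).support) (FTree.node L cs) ∧
      (∀ N ∈ S.nests, w ∈ N → (FTree.node L cs).support ⊆ N) := by
  induction h with
  | node Y ts hY hYsub hmem hcover hsorted hchild ih =>
    have hcon := IsConstruct.node Y ts hY hYsub hmem hcover hsorted hchild
    by_cases hwY : w ∈ Y
    · refine ⟨Y, ts, fun N hN => hN, FTree.mem_labels_node.mpr (Or.inl rfl), hwY, ?_, ?_⟩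
      · rw [hcon.support_eq, restrict_self]; exact hcon
      · intro N hN hwN
        rcases FTree.mem_nests_node.mp hN with rfl | ⟨t, ht, hNt⟩
        · exact Finset.Subset.refl _
        · exact absurd (Finset.mem_sdiff.mp
            (((hchild t ht).nests_subset_support N hNt).trans
              (comp_subset_sdiff (hmem t ht)) hwN)).2 (not_not_intro hwY)
    · obtain ⟨t, ht, hwt⟩ : ∃ t ∈ ts, w ∈ t.support := by
        rcases FTree.mem_support_node.mp hw with h' | h'
        · exact absurd h' hwY
        · exact h'
      obtain ⟨L, cs, hnest, hlab, hwL, hconL, hmin⟩ := ih t ht hwt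
      have hsupsub : (FTree.node L cs).support ⊆ t.support :=
        (hchild t ht).nests_subset_support _ (hnest _ (FTree.support_mem_nests _))
      refine ⟨L, cs, ?_, ?_, hwL, ?_, ?_⟩
      · exact fun N hN => FTree.mem_nests_node.mpr (Or.inr ⟨t, ht, hnest N hN⟩)
      · exact FTree.mem_labels_node.mpr (Or.inr ⟨t, ht, hlab⟩)
      · rwa [restrict_restrict _ hsupsub] at hconL
      · intro N hN hwN
        rcases FTree.mem_nests_node.mp hN with rfl | ⟨t', ht', hNt'⟩
        · exact hsupsub.trans fun a ha => FTree.mem_support_node.mpr (Or.inr ⟨t, ht, ha⟩)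
        · by_cases htt : t' = t
          · subst htt; exact hmin N hNt' hwN
          · exfalso
            have h1 : w ∈ t'.support := (hchild t' ht').nests_subset_support N hNt' hwN
            exact Finset.disjoint_left.mp
              (children_disjoint hcon t' ht' t ht htt) h1 hwt

theorem IsConstruct.suppAt_min {H : NHypergraph α} {S : FTree α} (h : IsConstruct H S)
    (hsing : ∀ X ∈ S.labels, X.card = 1) {w : α} (hw : w ∈ S.support) :
    w ∈ S.suppAt {w} ∧ S.suppAt {w} ∈ S.nests ∧
      ∀ N ∈ S.nests, w ∈ N → S.suppAt {w} ⊆ N := by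
  induction h with
  | node Y ts hY hYsub hmem hcover hsorted hchild ih =>
    have hcon := IsConstruct.node Y ts hY hYsub hmem hcover hsorted hchild
    by_cases hwY : w ∈ Y
    · have hYw : Y = {w} := by
        obtain ⟨a, ha⟩ := Finset.card_eq_one.mp
          (hsing Y (FTree.mem_labels_node.mpr (Or.inl rfl)))
        rw [ha] at hwY ⊢
        rw [Finset.mem_singleton.mp hwY]
      have hsupp : (FTree.node Y ts).suppAt {w} = (FTree.node Y ts).support := by
        rw [FTree.suppAt, FTree.subtreeAt, if_pos hYw]; rfl
      rw [hsupp]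
      refine ⟨FTree.mem_support_node.mpr (Or.inl hwY), FTree.support_mem_nests _, ?_⟩
      intro N hN hwN
      rcases FTree.mem_nests_node.mp hN with rfl | ⟨t, ht, hNt⟩
      · exact Finset.Subset.refl _
      · exact absurd (Finset.mem_sdiff.mp
          (((hchild t ht).nests_subset_support N hNt).trans
            (comp_subset_sdiff (hmem t ht)) hwN)).2 (not_not_intro hwY)
    · have hYne : ¬(Y = {w}) := fun h' => hwY (h' ▸ Finset.mem_singleton_self w)
      obtain ⟨t, ht, hwt⟩ : ∃ t ∈ ts, w ∈ t.support := by
        rcases FTree.mem_support_node.mp hw with h' | h'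
        · exact absurd h' hwY
        · exact h'
      have key : ∀ ts' : List (FTree α), (∀ t ∈ ts', t ∈ ts) → (∃ t ∈ ts', w ∈ t.support) →
          ∃ M : FTree α, FTree.subtreeAtList ts' {w} = some M ∧ w ∈ M.support ∧
            (∃ t ∈ ts', M.support ∈ t.nests) ∧
            ∀ t' ∈ ts', ∀ N ∈ t'.nests, w ∈ N → M.support ⊆ N := by
        intro ts'
        induction ts' with
        | nil => rintro _ ⟨t', ht', _⟩; exact absurd ht' (List.not_mem_nil)
        | cons t₀ rest ihl =>
          intro hsub hex
          have ht₀ts : t₀ ∈ ts := hsub t₀ (List.mem_cons_self)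
          by_cases hwt₀ : w ∈ t₀.support
          · have hsing₀ : ∀ X ∈ t₀.labels, X.card = 1 := fun X hX =>
              hsing X (FTree.mem_labels_node.mpr (Or.inr ⟨t₀, ht₀ts, hX⟩))
            obtain ⟨hmem₀, hnest₀, hmin₀⟩ := ih t₀ ht₀ts hsing₀ hwt₀
            obtain ⟨R, hR⟩ : ∃ R, FTree.subtreeAt t₀ {w} = some R := by
              cases hcase : FTree.subtreeAt t₀ {w} with
              | none =>
                rw [FTree.suppAt, hcase] at hmem₀
                simp at hmem₀
              | some R => exact ⟨R, rfl⟩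
            have hsupp₀ : t₀.suppAt {w} = R.support := by rw [FTree.suppAt, hR]; rfl
            rw [hsupp₀] at hmem₀ hnest₀ hmin₀
            refine ⟨R, ?_, hmem₀, ⟨t₀, List.mem_cons_self, hnest₀⟩, ?_⟩
            · rw [FTree.subtreeAtList, hR]; rfl
            · intro t' ht' N hNt' hwN
              rcases List.mem_cons.mp ht' with rfl | ht'rest
              · exact hmin₀ N hNt' hwN
              · by_cases htt : t' = t₀
                · subst htt; exact hmin₀ N hNt' hwN
                · exfalso
                  have h1 : w ∈ t'.support :=
                    (hchild t' (hsub t' ht')).nests_subset_support N hNt' hwN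
                  exact Finset.disjoint_left.mp
                    (children_disjoint hcon t' (hsub t' ht') t₀ ht₀ts htt) h1 hwt₀
          · have hnone : FTree.subtreeAt t₀ {w} = none :=
              (hchild t₀ ht₀ts).subtreeAt_eq_none fun hL =>
                hwt₀ ((hchild t₀ ht₀ts).labels_subset_support _ hL
                  (Finset.mem_singleton_self w))
            obtain ⟨tw, htw, hwtw⟩ := hex
            have htwrest : tw ∈ rest := by
              rcases List.mem_cons.mp htw with rfl | h'
              · exact absurd hwtw hwt₀
              · exact h'
            obtain ⟨M, hML, hwM, ⟨tm, htm, hMn⟩, hMmin⟩ :=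
              ihl (fun t' ht' => hsub t' (List.mem_cons_of_mem _ ht')) ⟨tw, htwrest, hwtw⟩
            refine ⟨M, ?_, hwM, ⟨tm, List.mem_cons_of_mem _ htm, hMn⟩, ?_⟩
            · rw [FTree.subtreeAtList, hnone]; exact hML
            · intro t' ht' N hNt' hwN
              rcases List.mem_cons.mp ht' with rfl | ht'rest
              · exfalso
                exact hwt₀ ((hchild t' ht₀ts).nests_subset_support N hNt' hwN)
              · exact hMmin t' ht'rest N hNt' hwN
      obtain ⟨M, hML, hwM, ⟨tm, htm, hMn⟩, hMmin⟩ := key ts (fun _ h' => h') ⟨t, ht, hwt⟩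
      have hsupp : (FTree.node Y ts).suppAt {w} = M.support := by
        rw [FTree.suppAt, FTree.subtreeAt, if_neg hYne, hML]; rfl
      rw [hsupp]
      have hMnS : M.support ∈ (FTree.node Y ts).nests :=
        FTree.mem_nests_node.mpr (Or.inr ⟨tm, htm, hMn⟩)
      refine ⟨hwM, hMnS, ?_⟩
      intro N hN hwN
      rcases FTree.mem_nests_node.mp hN with rfl | ⟨t', ht', hNt'⟩
      · exact hcon.nests_subset_support _ hMnS
      · exact hMmin t' ht' N hNt' hwN

theorem IsConstruct.suppAt_injective {H : NHypergraph α} {S : FTree α} (h : IsConstruct H S)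
    (hsing : ∀ X ∈ S.labels, X.card = 1) {w w' : α} (hw : w ∈ S.support)
    (hw' : w' ∈ S.support) (hne : w ≠ w') : S.suppAt {w} ≠ S.suppAt {w'} := by
  intro heq
  obtain ⟨hmemw, hnestw, hminw⟩ := h.suppAt_min hsing hw
  obtain ⟨hmemw', hnestw', hminw'⟩ := h.suppAt_min hsing hw'
  obtain ⟨L, cs, hnest, hlab, hwL, hconL, hmin⟩ := h.minNest hw
  have hsupmem : (FTree.node L cs).support ∈ S.nests := hnest _ (FTree.support_mem_nests _)
  have hwsup : w ∈ (FTree.node L cs).support :=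
    FTree.mem_support_node.mpr (Or.inl hwL)
  have h1 : S.suppAt {w} ⊆ (FTree.node L cs).support := hminw _ hsupmem hwsup
  have h2 : (FTree.node L cs).support ⊆ S.suppAt {w} := hmin _ hnestw hmemw
  have hMsup : (FTree.node L cs).support = S.suppAt {w} := Finset.Subset.antisymm h2 h1
  have hL : L = {w} := by
    obtain ⟨a, ha⟩ := Finset.card_eq_one.mp (hsing L hlab)
    rw [ha] at hwL ⊢
    rw [Finset.mem_singleton.mp hwL]
  have hw'M : w' ∈ S.suppAt {w} := heq ▸ hmemw'
  have hw'sup : w' ∈ (FTree.node L cs).support := hMsup ▸ hw'M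
  have hwLmem : w ∈ L := hL ▸ Finset.mem_singleton_self w
  rcases FTree.mem_support_node.mp hw'sup with h' | ⟨c, hc, hw'c⟩
  · rw [hL] at h'
    exact hne (Finset.mem_singleton.mp h').symm
  · have hcsub := (hconL.child_connected c hc).1
    have hcnest : c.support ∈ S.nests :=
      hnest _ (FTree.mem_nests_node.mpr (Or.inr ⟨c, hc, FTree.support_mem_nests c⟩))
    have hsub : S.suppAt {w} ⊆ c.support := by
      rw [heq]; exact hminw' _ hcnest hw'c
    have hwc : w ∈ c.support := hsub hmemw
    exact (Finset.mem_sdiff.mp (hcsub hwc)).2 hwLmem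

end MinNest

section Injectivity

variable {α : Type*} [LinearOrder α]

open NHypergraph

theorem sorted_lists_eq : ∀ (ss ts : List (FTree α)),
    ss.Pairwise (fun a b => a.support.max < b.support.max) →
    ts.Pairwise (fun a b => a.support.max < b.support.max) →
    (∀ s ∈ ss, ∃ t ∈ ts, t.support = s.support) →
    (∀ t ∈ ts, ∃ s ∈ ss, s.support = t.support) →
    (∀ s ∈ ss, ∀ t ∈ ts, s.support = t.support → s = t) →
    ss = ts := by
  intro ss
  induction ss with
  | nil =>
    intro ts _ _ _ hts _
    cases ts with
    | nil => rfl
    | cons t ts =>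
      obtain ⟨s, hs, _⟩ := hts t (List.mem_cons_self)
      exact absurd hs (List.not_mem_nil)
  | cons s₀ rest ih =>
    intro ts hps hpt hss hts hmatch
    cases ts with
    | nil =>
      obtain ⟨t, ht, _⟩ := hss s₀ (List.mem_cons_self)
      exact absurd ht (List.not_mem_nil)
    | cons t₀ trest =>
      have hsupp : s₀.support = t₀.support := by
        obtain ⟨t, ht, hts0⟩ := hss s₀ (List.mem_cons_self)
        rcases List.mem_cons.mp ht with rfl | htr
        · exact hts0.symm
        · have h1 : t₀.support.max < t.support.max := (List.pairwise_cons.mp hpt).1 t htr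
          obtain ⟨s, hs, hst0⟩ := hts t₀ (List.mem_cons_self)
          rcases List.mem_cons.mp hs with rfl | hsr
          · exact hst0
          · have h2 : s₀.support.max < s.support.max := (List.pairwise_cons.mp hps).1 s hsr
            rw [hst0] at h2
            rw [hts0] at h1
            exact absurd (h1.trans h2) (lt_irrefl _)
      have hhead : s₀ = t₀ := hmatch s₀ (List.mem_cons_self) t₀ (List.mem_cons_self) hsupp
      subst hhead
      have htail : rest = trest := by
        refine ih trest (List.pairwise_cons.mp hps).2 (List.pairwise_cons.mp hpt).2 ?_ ?_ ?_
        · intro s hs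
          obtain ⟨t, ht, h'⟩ := hss s (List.mem_cons_of_mem _ hs)
          rcases List.mem_cons.mp ht with rfl | htr
          · exfalso
            have hlt := (List.pairwise_cons.mp hps).1 s hs
            rw [h'] at hlt
            exact lt_irrefl _ hlt
          · exact ⟨t, htr, h'⟩
        · intro t ht
          obtain ⟨s, hs, h'⟩ := hts t (List.mem_cons_of_mem _ ht)
          rcases List.mem_cons.mp hs with rfl | hsr
          · exfalso
            have hlt := (List.pairwise_cons.mp hpt).1 t ht
            rw [← h'] at hlt
            exact lt_irrefl _ hlt
          · exact ⟨s, hsr, h'⟩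
        · intro s hs t ht h'
          exact hmatch s (List.mem_cons_of_mem _ hs) t (List.mem_cons_of_mem _ ht) h'
      rw [htail]

theorem IsConstruct.root_label_char {H : NHypergraph α} {Y : Finset α} {ts : List (FTree α)}
    (h : IsConstruct H (FTree.node Y ts)) {a : α} :
    a ∈ Y ↔ a ∈ H.verts ∧
      ∀ N ∈ (FTree.node Y ts).nests, N ≠ (FTree.node Y ts).support → a ∉ N := by
  cases h with
  | node _ _ hY hYsub hmem hcover hsorted hchild =>
    have hcon := IsConstruct.node Y ts hY hYsub hmem hcover hsorted hchild
    constructor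
    · intro ha
      refine ⟨hYsub ha, ?_⟩
      intro N hN hNne haN
      rcases FTree.mem_nests_node.mp hN with rfl | ⟨t, ht, hNt⟩
      · exact hNne rfl
      · exact (Finset.mem_sdiff.mp (((hchild t ht).nests_subset_support N hNt).trans
          (comp_subset_sdiff (hmem t ht)) haN)).2 ha
    · rintro ⟨hav, hno⟩
      by_contra haY
      obtain ⟨C, hC, haC⟩ := (H.restrict (H.verts \ Y)).comp_exists (v := a)
        (by simp [hav, haY])
      obtain ⟨t, ht, hts⟩ := hcover C hC
      refine hno t.support
        (FTree.mem_nests_node.mpr (Or.inr ⟨t, ht, FTree.support_mem_nests t⟩)) ?_ (hts ▸ haC)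
      intro heq
      obtain ⟨y₀, hy₀⟩ := hY
      have hy₀t : y₀ ∈ t.support := heq ▸ (FTree.mem_support_node.mpr (Or.inl hy₀))
      exact (Finset.mem_sdiff.mp (comp_subset_sdiff (hmem t ht) hy₀t)).2 hy₀

theorem IsConstruct.child_nests_char {H : NHypergraph α} {Y : Finset α} {ss : List (FTree α)}
    (h : IsConstruct H (FTree.node Y ss)) {s : FTree α} (hs : s ∈ ss) {N : Finset α} :
    N ∈ s.nests ↔ N ∈ (FTree.node Y ss).nests ∧ N ⊆ s.support := by
  cases h with
  | node _ _ hY hYsub hmem hcover hsorted hchild =>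
    have hcon := IsConstruct.node Y ss hY hYsub hmem hcover hsorted hchild
    constructor
    · intro hN
      exact ⟨FTree.mem_nests_node.mpr (Or.inr ⟨s, hs, hN⟩),
        (hchild s hs).nests_subset_support N hN⟩
    · rintro ⟨hN, hNsub⟩
      rcases FTree.mem_nests_node.mp hN with rfl | ⟨s', hs', hNs'⟩
      · exfalso
        obtain ⟨y₀, hy₀⟩ := hY
        have : y₀ ∈ s.support :=
          hNsub (FTree.mem_support_node.mpr (Or.inl hy₀))
        exact (Finset.mem_sdiff.mp (comp_subset_sdiff (hmem s hs) this)).2 hy₀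
      · by_cases hss' : s' = s
        · exact hss' ▸ hNs'
        · exfalso
          obtain ⟨a, ha⟩ := (hchild s' hs').nests_nonempty N hNs'
          exact Finset.disjoint_left.mp (children_disjoint hcon s' hs' s hs hss')
            ((hchild s' hs').nests_subset_support N hNs' ha) (hNsub ha)

theorem IsConstruct.nestSet_injective {H : NHypergraph α} {S : FTree α} (h : IsConstruct H S) :
    ∀ T : FTree α, IsConstruct H T → S.nestSet = T.nestSet → S = T := by
  induction h with
  | node Y ss hY hYsub hmem hcover hsorted hchild ih =>
    intro T hT hnesteq
    have hconS := IsConstruct.node Y ss hY hYsub hmem hcover hsorted hchild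
    cases T with
    | node Z ts =>
      have hmemiff : ∀ N : Finset α,
          N ∈ (FTree.node Y ss).nests ↔ N ∈ (FTree.node Z ts).nests := by
        intro N
        rw [← List.mem_toFinset, ← List.mem_toFinset]
        show N ∈ (FTree.node Y ss).nestSet ↔ N ∈ (FTree.node Z ts).nestSet
        rw [hnesteq]
      have hsupeq : (FTree.node Y ss).support = (FTree.node Z ts).support := by
        rw [hconS.support_eq, hT.support_eq]
      have hYZ : Y = Z := by
        ext a
        rw [hconS.root_label_char, hT.root_label_char]
        constructor
        · rintro ⟨h1, h2⟩
          exact ⟨h1, fun N hN hne => h2 N ((hmemiff N).mpr hN) (hsupeq ▸ hne)⟩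
        · rintro ⟨h1, h2⟩
          exact ⟨h1, fun N hN hne => h2 N ((hmemiff N).mp hN) (hsupeq ▸ hne)⟩
      subst hYZ
      have hmatch : ∀ s ∈ ss, ∀ t ∈ ts, s.support = t.support → s = t := by
        intro s hs t ht hsup
        refine ih s hs t ?_ ?_
        · rw [hsup]; exact hT.child_construct t ht
        · ext N
          rw [FTree.nestSet, FTree.nestSet, List.mem_toFinset, List.mem_toFinset,
            hconS.child_nests_char hs, hT.child_nests_char ht, hsup, hmemiff]
      have hss : ∀ s ∈ ss, ∃ t ∈ ts, t.support = s.support := by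
        intro s hs
        cases hT with
        | node _ _ hYT hYsubT hmemT hcoverT hsortedT hchildT =>
          exact hcoverT s.support (hmem s hs)
      have hts : ∀ t ∈ ts, ∃ s ∈ ss, s.support = t.support := by
        intro t ht
        cases hT with
        | node _ _ hYT hYsubT hmemT hcoverT hsortedT hchildT =>
          exact hcover t.support (hmemT t ht)
      have hsortedT : ts.Pairwise (fun a b => a.support.max < b.support.max) := by
        cases hT with
        | node _ _ hYT hYsubT hmemT hcoverT hsortedT hchildT => exact hsortedT
      rw [sorted_lists_eq ss ts hsorted hsortedT hss hts hmatch]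

end Injectivity

section Counting

variable {α : Type*} [LinearOrder α]

open NHypergraph

theorem IsConstruct.labels_eq_of_not_disjoint {H : NHypergraph α} {S : FTree α}
    (h : IsConstruct H S) :
    ∀ L₁ ∈ S.labels, ∀ L₂ ∈ S.labels, ¬Disjoint L₁ L₂ → L₁ = L₂ := by
  induction h with
  | node Y ts hY hYsub hmem hcover hsorted hchild ih =>
    have hcon := IsConstruct.node Y ts hY hYsub hmem hcover hsorted hchild
    intro L₁ h₁ L₂ h₂ hnd
    rcases FTree.mem_labels_node.mp h₁ with rfl | ⟨t₁, ht₁, hL₁⟩ <;>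
      rcases FTree.mem_labels_node.mp h₂ with rfl | ⟨t₂, ht₂, hL₂⟩
    · rfl
    · exfalso
      refine hnd (Finset.disjoint_left.mpr fun a haY haL₂ => ?_)
      have := ((hchild t₂ ht₂).labels_subset_support L₂ hL₂).trans
        (comp_subset_sdiff (hmem t₂ ht₂)) haL₂
      exact (Finset.mem_sdiff.mp this).2 haY
    · exfalso
      refine hnd (Finset.disjoint_right.mpr fun a haY haL₁ => ?_)
      have := ((hchild t₁ ht₁).labels_subset_support L₁ hL₁).trans
        (comp_subset_sdiff (hmem t₁ ht₁)) haL₁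
      exact (Finset.mem_sdiff.mp this).2 haY
    · by_cases htt : t₁ = t₂
      · subst htt
        exact ih t₁ ht₁ L₁ hL₁ L₂ hL₂ hnd
      · exfalso
        refine hnd (Finset.disjoint_left.mpr fun a ha₁ ha₂ => ?_)
        exact Finset.disjoint_left.mp (children_disjoint hcon t₁ ht₁ t₂ ht₂ htt)
          ((hchild t₁ ht₁).labels_subset_support L₁ hL₁ ha₁)
          ((hchild t₂ ht₂).labels_subset_support L₂ hL₂ ha₂)

theorem count_split (H : NHypergraph α) {W N : Finset α} {x y : α} (hW : W ⊆ H.verts)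
    (hy : y ∈ W) (hcomp : (H.restrict (W \ {y})).IsComponent N) (hx : x ∈ N) :
    (H.sat.filter fun e => x ∈ e ∧ e ⊆ W).card =
      (H.sat.filter fun e => x ∈ e ∧ e ⊆ N).card +
        (H.sat.filter fun e => x ∈ e ∧ y ∈ e ∧ e ⊆ W).card := by
  have hNsub : N ⊆ W \ {y} := comp_subset_sdiff hcomp
  have hunion : (H.sat.filter fun e => x ∈ e ∧ e ⊆ W) =
      (H.sat.filter fun e => x ∈ e ∧ e ⊆ N) ∪
        (H.sat.filter fun e => x ∈ e ∧ y ∈ e ∧ e ⊆ W) := by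
    ext e
    simp only [Finset.mem_union, Finset.mem_filter]
    constructor
    · rintro ⟨hsat, hxe, hew⟩
      by_cases hye : y ∈ e
      · exact Or.inr ⟨hsat, hxe, hye, hew⟩
      · left
        refine ⟨hsat, hxe, ?_⟩
        obtain ⟨hever, hconn⟩ := NHypergraph.mem_sat.mp hsat
        have hesub : e ⊆ W \ {y} := fun a ha =>
          Finset.mem_sdiff.mpr ⟨hew ha, fun h' => hye ((Finset.mem_singleton.mp h') ▸ ha)⟩
        refine NHypergraph.connected_subset_component hcomp ?_ ?_
          ⟨x, Finset.mem_inter.mpr ⟨hxe, hx⟩⟩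
        · rw [NHypergraph.restrict_verts]
          exact Finset.subset_inter hesub hever
        · rwa [NHypergraph.restrict_restrict _ hesub]
    · rintro (⟨hsat, hxe, hen⟩ | ⟨hsat, hxe, _, hew⟩)
      · exact ⟨hsat, hxe, (hen.trans hNsub).trans Finset.sdiff_subset⟩
      · exact ⟨hsat, hxe, hew⟩
  rw [hunion, Finset.card_union_of_disjoint]
  rw [Finset.disjoint_left]
  intro e he1 he2
  rw [Finset.mem_filter] at he1 he2
  have hyN : y ∉ N := fun h => (Finset.mem_sdiff.mp (hNsub h)).2 (Finset.mem_singleton_self y)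
  exact hyN (he1.2.2 he2.2.2.1)

theorem exists_card_two_label : ∀ l : List (Finset α), (∀ L ∈ l, L.Nonempty) →
    (l.map fun X => X.card - 1).sum = 1 →
    ∃ P ∈ l, P.card = 2 ∧ ∀ L ∈ l, L ≠ P → L.card = 1 := by
  intro l
  induction l with
  | nil => intro _ h; simp at h
  | cons P rest ih =>
    intro hne hsum
    rw [List.map_cons, List.sum_cons] at hsum
    by_cases hP : P.card - 1 = 0
    · have hcP : P.card = 1 := by
        have := (hne P (List.mem_cons_self)).card_pos
        omega
      rw [hP, zero_add] at hsum
      obtain ⟨P', hP', hc2, hothers⟩ := ih (fun L hL => hne L (List.mem_cons_of_mem _ hL)) hsum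
      refine ⟨P', List.mem_cons_of_mem _ hP', hc2, ?_⟩
      intro L hL hne'
      rcases List.mem_cons.mp hL with rfl | h'
      · exact hcP
      · exact hothers L h' hne'
    · have h1 : P.card - 1 = 1 ∧ (rest.map fun X => X.card - 1).sum = 0 := by omega
      have hc2 : P.card = 2 := by
        have := (hne P (List.mem_cons_self)).card_pos
        omega
      refine ⟨P, List.mem_cons_self, hc2, ?_⟩
      intro L hL hne'
      rcases List.mem_cons.mp hL with rfl | h'
      · exact absurd rfl hne'
      · have hz : L.card - 1 = 0 :=
          (List.sum_eq_zero_iff.mp h1.2) _ (List.mem_map_of_mem h')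
        have := (hne L (List.mem_cons_of_mem _ h')).card_pos
        omega

theorem key_ne {H : NHypergraph α} {S T : FTree α} (μ : α → ℝ)
    {x y : α} (hxy : x ≠ y) (hμ : μ x ≠ μ y)
    (hxv : x ∈ H.verts) (hyv : y ∈ H.verts)
    {W NS NT : Finset α} (hWsat : W ∈ H.sat) (hxW : x ∈ W) (hyW : y ∈ W)
    (hcompS : (H.restrict (W \ {y})).IsComponent NS) (hxNS : x ∈ NS)
    (hcompT : (H.restrict (W \ {x})).IsComponent NT) (hyNT : y ∈ NT)
    (hSx : S.suppAt {x} = NS) (hSy : S.suppAt {y} = W)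
    (hTx : T.suppAt {x} = W) (hTy : T.suppAt {y} = NT)
    (hother : ∀ w ∈ H.verts, w ≠ x → w ≠ y → coordVec H S w = coordVec H T w) :
    (∑ w ∈ H.verts, μ w * (coordVec H S w : ℝ)) ≠
      ∑ w ∈ H.verts, μ w * (coordVec H T w : ℝ) := by
  have hWsub : W ⊆ H.verts := (NHypergraph.mem_sat.mp hWsat).1
  set c := (H.sat.filter fun e => x ∈ e ∧ y ∈ e ∧ e ⊆ W).card with hc
  have hcount_x : coordVec H T x = coordVec H S x + c := by
    simp only [coordVec]
    rw [hSx, hTx]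
    exact count_split H hWsub hyW hcompS hxNS
  have hcount_y : coordVec H S y = coordVec H T y + c := by
    simp only [coordVec]
    rw [hSy, hTy]
    have h2 := count_split H (x := y) (y := x) hWsub hxW hcompT hyNT
    rw [h2]
    have hfe : (H.sat.filter fun e => x ∈ e ∧ y ∈ e ∧ e ⊆ W) =
        (H.sat.filter fun e => y ∈ e ∧ x ∈ e ∧ e ⊆ W) := by
      ext e
      simp only [Finset.mem_filter]
      tauto
    rw [hc, hfe]
  have hcpos : 0 < c :=
    Finset.card_pos.mpr ⟨W, Finset.mem_filter.mpr ⟨hWsat, hxW, hyW, Finset.Subset.refl W⟩⟩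
  intro heq
  have hzero : ∑ w ∈ H.verts,
      (μ w * (coordVec H S w : ℝ) - μ w * (coordVec H T w : ℝ)) = 0 := by
    rw [Finset.sum_sub_distrib, heq, sub_self]
  have hpairsub : ({x, y} : Finset α) ⊆ H.verts := by
    intro a ha
    rcases Finset.mem_insert.mp ha with rfl | h
    · exact hxv
    · rw [Finset.mem_singleton.mp h]; exact hyv
  have hrestrict : ∑ w ∈ H.verts,
      (μ w * (coordVec H S w : ℝ) - μ w * (coordVec H T w : ℝ)) =
      ∑ w ∈ ({x, y} : Finset α),
        (μ w * (coordVec H S w : ℝ) - μ w * (coordVec H T w : ℝ)) := by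
    refine (Finset.sum_subset hpairsub ?_).symm
    intro w hw hnw
    have hwx : w ≠ x := fun h => hnw (h ▸ Finset.mem_insert_self x {y})
    have hwy : w ≠ y := fun h => hnw (by
      rw [h]; exact Finset.mem_insert_of_mem (Finset.mem_singleton_self y))
    rw [hother w hw hwx hwy]
    ring
  rw [hrestrict, Finset.sum_pair hxy] at hzero
  have hx' : (coordVec H T x : ℝ) = (coordVec H S x : ℝ) + c := by exact_mod_cast hcount_x
  have hy' : (coordVec H S y : ℝ) = (coordVec H T y : ℝ) + c := by exact_mod_cast hcount_y
  rw [hx', hy'] at hzero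
  have hfin : (μ y - μ x) * (c : ℝ) = 0 := by linear_combination hzero
  rcases mul_eq_zero.mp hfin with h' | h'
  · exact hμ (by linarith [sub_eq_zero.mp h'])
  · exact (ne_of_gt (show (0:ℝ) < (c:ℝ) by exact_mod_cast hcpos)) h'

end Counting

section Assembly

variable {α : Type*} [LinearOrder α]

open NHypergraph

theorem component_of_case {H : NHypergraph α} {S : FTree α} (hS : IsConstruct H S)
    (hsing : ∀ X ∈ S.labels, X.card = 1) {x y : α} (hxy : x ≠ y)
    {W NS : Finset α} (hWsub : W ⊆ H.verts)
    (hMy : S.suppAt {y} = W) (hxW : x ∈ W) (hyW : y ∈ W) (hysup : y ∈ S.support)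
    (hfilter : ∀ N ∈ S.nests, x ∈ N → N = NS ∨ W ⊆ N) :
    (H.restrict (W \ {y})).IsComponent NS ∧ x ∈ NS := by
  obtain ⟨L, cs, hnest, hlab, hyL, hconL, hmin⟩ := hS.minNest hysup
  obtain ⟨hymem, hynest, hymin⟩ := hS.suppAt_min hsing hysup
  have hsupnest : (FTree.node L cs).support ∈ S.nests := hnest _ (FTree.support_mem_nests _)
  have hysupL : y ∈ (FTree.node L cs).support := FTree.mem_support_node.mpr (Or.inl hyL)
  have hsupW : (FTree.node L cs).support = W := by
    rw [← hMy]
    exact Finset.Subset.antisymm (hmin _ hynest hymem) (hymin _ hsupnest hysupL)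
  have hL : L = {y} := by
    obtain ⟨a, ha⟩ := Finset.card_eq_one.mp (hsing L hlab)
    rw [ha] at hyL ⊢
    rw [Finset.mem_singleton.mp hyL]
  have hxsupL : x ∈ (FTree.node L cs).support := hsupW ▸ hxW
  obtain ⟨c, hc, hxc⟩ : ∃ c ∈ cs, x ∈ c.support := by
    rcases FTree.mem_support_node.mp hxsupL with h' | h'
    · rw [hL] at h'
      exact absurd (Finset.mem_singleton.mp h') hxy
    · exact h'
  rw [hsupW] at hconL
  have hWv : (H.restrict W).verts = W := by
    rw [NHypergraph.restrict_verts, Finset.inter_eq_left.mpr hWsub]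
  cases hconL with
  | node _ _ hYc hYsubc hmemc hcoverc hsortedc hchildc =>
    have hcompc := hmemc c hc
    rw [hWv, hL] at hcompc
    rw [NHypergraph.restrict_restrict _ Finset.sdiff_subset] at hcompc
    have hcnestS : c.support ∈ S.nests :=
      hnest _ (FTree.mem_nests_node.mpr (Or.inr ⟨c, hc, FTree.support_mem_nests c⟩))
    have hcsub : c.support ⊆ W \ {y} := comp_subset_sdiff hcompc
    have hcNS : c.support = NS := by
      rcases hfilter _ hcnestS hxc with h' | h'
      · exact h'
      · exact absurd (Finset.mem_singleton_self y)
          (Finset.mem_sdiff.mp (hcsub (h' hyW))).2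
    rw [← hcNS]
    exact ⟨hcompc, hxc⟩

theorem suppAt_agree {H : NHypergraph α} {S T : FTree α}
    (hS : IsConstruct H S) (hsingS : ∀ X ∈ S.labels, X.card = 1)
    (hT : IsConstruct H T) (hsingT : ∀ X ∈ T.labels, X.card = 1)
    {A : Finset (Finset α)} {NS NT : Finset α}
    (hSset : S.nestSet = insert NS A) (hTset : T.nestSet = insert NT A)
    {u v w : α} (hu : u ∈ H.verts) (hv : v ∈ H.verts) (hw : w ∈ H.verts)
    (hwu : w ≠ u) (hwv : w ≠ v)
    (hSu : S.suppAt {u} = NS) (hTv : T.suppAt {v} = NT) :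
    S.suppAt {w} = T.suppAt {w} := by
  have hwS : w ∈ S.support := hS.support_eq ▸ hw
  have hwT : w ∈ T.support := hT.support_eq ▸ hw
  obtain ⟨hSmem, hSnest, hSmin⟩ := hS.suppAt_min hsingS hwS
  obtain ⟨hTmem, hTnest, hTmin⟩ := hT.suppAt_min hsingT hwT
  have hSA : S.suppAt {w} ∈ A := by
    have h1 : S.suppAt {w} ∈ S.nestSet := List.mem_toFinset.mpr hSnest
    rw [hSset] at h1
    rcases Finset.mem_insert.mp h1 with h' | h'
    · exact absurd (h'.trans hSu.symm)
        (hS.suppAt_injective hsingS hwS (hS.support_eq ▸ hu) hwu)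
    · exact h'
  have hTA : T.suppAt {w} ∈ A := by
    have h1 : T.suppAt {w} ∈ T.nestSet := List.mem_toFinset.mpr hTnest
    rw [hTset] at h1
    rcases Finset.mem_insert.mp h1 with h' | h'
    · exact absurd (h'.trans hTv.symm)
        (hT.suppAt_injective hsingT hwT (hT.support_eq ▸ hv) hwv)
    · exact h'
  have hTinS : T.suppAt {w} ∈ S.nests := by
    have h2 : T.suppAt {w} ∈ S.nestSet := by
      rw [hSset]; exact Finset.mem_insert_of_mem hTA
    exact List.mem_toFinset.mp h2
  have hSinT : S.suppAt {w} ∈ T.nests := by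
    have h2 : S.suppAt {w} ∈ T.nestSet := by
      rw [hTset]; exact Finset.mem_insert_of_mem hSA
    exact List.mem_toFinset.mp h2
  exact Finset.Subset.antisymm (hSmin _ hTinS hTmem) (hTmin _ hSinT hSmem)

theorem covered_dichotomy {H : NHypergraph α} {V S : FTree α}
    (hV : IsConstruct H V) (hS : IsConstruct H S) (hsing : ∀ X ∈ S.labels, X.card = 1)
    {x y : α} (hxy : x ≠ y) {W : Finset α} (hWnest : W ∈ V.nests)
    (hxW : x ∈ W) (hyW : y ∈ W)
    (hWmin : ∀ N ∈ V.nests, x ∈ N ∨ y ∈ N → W ⊆ N)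
    {NS : Finset α} (hNSmem : NS ∈ S.nests) (hNV : V.nestSet = S.nestSet.erase NS) :
    (S.suppAt {x} = NS ∧ S.suppAt {y} = W ∧
      (H.restrict (W \ {y})).IsComponent NS ∧ x ∈ NS) ∨
    (S.suppAt {y} = NS ∧ S.suppAt {x} = W ∧
      (H.restrict (W \ {x})).IsComponent NS ∧ y ∈ NS) := by
  have hWsub : W ⊆ H.verts := hV.nests_subset_verts W hWnest
  have hxv : x ∈ H.verts := hWsub hxW
  have hyv : y ∈ H.verts := hWsub hyW
  have hxS : x ∈ S.support := hS.support_eq ▸ hxv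
  have hyS : y ∈ S.support := hS.support_eq ▸ hyv
  have hVsubS : ∀ N ∈ V.nests, N ∈ S.nests := by
    intro N hN
    have h1 : N ∈ V.nestSet := List.mem_toFinset.mpr hN
    rw [hNV] at h1
    exact List.mem_toFinset.mp (Finset.mem_of_mem_erase h1)
  have hcases : ∀ N ∈ S.nests, (x ∈ N ∨ y ∈ N) → N = NS ∨ W ⊆ N := by
    intro N hN hmemxy
    by_cases hNNS : N = NS
    · exact Or.inl hNNS
    · refine Or.inr (hWmin N ?_ hmemxy)
      have h1 : N ∈ V.nestSet := by
        rw [hNV]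
        exact Finset.mem_erase.mpr ⟨hNNS, List.mem_toFinset.mpr hN⟩
      exact List.mem_toFinset.mp h1
  obtain ⟨hxmem, hxnest, hxmin⟩ := hS.suppAt_min hsing hxS
  obtain ⟨hymem, hynest, hymin⟩ := hS.suppAt_min hsing hyS
  have hWS : W ∈ S.nests := hVsubS W hWnest
  have hMxW : S.suppAt {x} ⊆ W := hxmin _ hWS hxW
  have hMyW : S.suppAt {y} ⊆ W := hymin _ hWS hyW
  have hMx : S.suppAt {x} = NS ∨ S.suppAt {x} = W := by
    rcases hcases _ hxnest (Or.inl hxmem) with h' | h'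
    · exact Or.inl h'
    · exact Or.inr (Finset.Subset.antisymm hMxW h')
  have hMy : S.suppAt {y} = NS ∨ S.suppAt {y} = W := by
    rcases hcases _ hynest (Or.inr hymem) with h' | h'
    · exact Or.inl h'
    · exact Or.inr (Finset.Subset.antisymm hMyW h')
  have hne : S.suppAt {x} ≠ S.suppAt {y} := hS.suppAt_injective hsing hxS hyS hxy
  rcases hMx with hMx | hMx
  · left
    have hMyW' : S.suppAt {y} = W := by
      rcases hMy with h' | h'
      · exact absurd (hMx.trans h'.symm) hne
      · exact h'
    obtain ⟨hcomp, hxNS⟩ := component_of_case hS hsing hxy hWsub hMyW' hxW hyW hyS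
      (fun N hN hxN => hcases N hN (Or.inl hxN))
    exact ⟨hMx, hMyW', hcomp, hxNS⟩
  · right
    have hMyNS : S.suppAt {y} = NS := by
      rcases hMy with h' | h'
      · exact h'
      · exact absurd (hMx.trans h'.symm) hne
    obtain ⟨hcomp, hyNS⟩ := component_of_case hS hsing hxy.symm hWsub hMx hyW hxW hxS
      (fun N hN hyN => hcases N hN (Or.inr hyN))
    exact ⟨hMyNS, hMx, hcomp, hyNS⟩

end Assembly
/-- Corollary `Tamari-orientation-vector`.  Any vector `μ` with strictly
decreasing coordinates separates the endpoints of every edge of the Postnikov realization: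
for distinct constructions `S, T` joined by an edge, `⟨μ, v^S⟩ ≠ ⟨μ, v^T⟩`, i.e. `μ` is an
orientation vector. -/
theorem stmt10 {α : Type*} [LinearOrder α] (H : NHypergraph α) (hH : H.Connected)
    (μ : α → ℝ) (hμ : ∀ a b : α, a < b → μ b < μ a)
    (S T : FTree α) (hST : EdgeJoined H S T) :
    (∑ w ∈ H.verts, μ w * (coordVec H S w : ℝ)) ≠
      ∑ w ∈ H.verts, μ w * (coordVec H T w : ℝ) := by
  obtain ⟨⟨hSc, hsingS⟩, ⟨hTc, hsingT⟩, hne, V, hVc, hdim,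
    ⟨NS, hNSmem, hNSne, hVS⟩, ⟨NT, hNTmem, hNTne, hVT⟩⟩ := hST
  -- extract the unique pair label of `V`
  obtain ⟨P, hP, hPcard, hPothers⟩ := exists_card_two_label V.labels hVc.labels_nonempty
    (by simpa [FTree.dim] using hdim)
  obtain ⟨x, y, hxy, hPxy⟩ := Finset.card_eq_two.mp hPcard
  subst hPxy
  have hxP : x ∈ ({x, y} : Finset α) := Finset.mem_insert_self x {y}
  have hyP : y ∈ ({x, y} : Finset α) :=
    Finset.mem_insert_of_mem (Finset.mem_singleton_self y)
  have hxsupV : x ∈ V.support := hVc.labels_subset_support _ hP hxP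
  have hysupV : y ∈ V.support := hVc.labels_subset_support _ hP hyP
  -- the minimal nest `W` of `V` containing `x` (and `y`)
  obtain ⟨Lx, csx, hnx, hlabx, hxLx, hconx, hminx⟩ := hVc.minNest hxsupV
  obtain ⟨Ly, csy, hny, hlaby, hyLy, hcony, hminy⟩ := hVc.minNest hysupV
  have hLx : Lx = ({x, y} : Finset α) := hVc.labels_eq_of_not_disjoint _ hlabx _ hP
    (fun hd => Finset.disjoint_left.mp hd hxLx hxP)
  have hLy : Ly = ({x, y} : Finset α) := hVc.labels_eq_of_not_disjoint _ hlaby _ hP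
    (fun hd => Finset.disjoint_left.mp hd hyLy hyP)
  set Wx := (FTree.node Lx csx).support with hWxdef
  set Wy := (FTree.node Ly csy).support with hWydef
  have hWxn : Wx ∈ V.nests := hnx _ (FTree.support_mem_nests _)
  have hWyn : Wy ∈ V.nests := hny _ (FTree.support_mem_nests _)
  have hxWx : x ∈ Wx := FTree.mem_support_node.mpr (Or.inl hxLx)
  have hyWx : y ∈ Wx := FTree.mem_support_node.mpr (Or.inl (by rw [hLx]; exact hyP))
  have hxWy : x ∈ Wy := FTree.mem_support_node.mpr (Or.inl (by rw [hLy]; exact hxP))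
  have hWxy : Wx = Wy := Finset.Subset.antisymm (hminx _ hWyn hxWy) (hminy _ hWxn hyWx)
  have hWmin : ∀ N ∈ V.nests, x ∈ N ∨ y ∈ N → Wx ⊆ N := by
    intro N hN h'
    rcases h' with h' | h'
    · exact hminx N hN h'
    · rw [hWxy]; exact hminy N hN h'
  have hWsub : Wx ⊆ H.verts := hVc.nests_subset_verts _ hWxn
  have hWsat : Wx ∈ H.sat :=
    NHypergraph.mem_sat.mpr ⟨hWsub, hVc.nests_connected hH _ hWxn⟩
  have hxv : x ∈ H.verts := hWsub hxWx
  have hyv : y ∈ H.verts := hWsub hyWx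
  have hμxy : μ x ≠ μ y := by
    rcases lt_trichotomy x y with h | h | h
    · exact (hμ x y h).ne'
    · exact absurd h hxy
    · exact (hμ y x h).ne
  -- nested set bookkeeping
  have hNSset : NS ∈ S.nestSet := List.mem_toFinset.mpr hNSmem
  have hNTset : NT ∈ T.nestSet := List.mem_toFinset.mpr hNTmem
  have hSset : S.nestSet = insert NS V.nestSet := by
    rw [hVS, Finset.insert_erase hNSset]
  have hTset : T.nestSet = insert NT V.nestSet := by
    rw [hVT, Finset.insert_erase hNTset]
  -- dichotomies for S and T
  rcases covered_dichotomy hVc hSc hsingS hxy hWxn hxWx hyWx hWmin hNSmem hVS with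
    ⟨hSx, hSy, hScomp, hSmem⟩ | ⟨hSy, hSx, hScomp, hSmem⟩
  · rcases covered_dichotomy hVc hTc hsingT hxy hWxn hxWx hyWx hWmin hNTmem hVT with
      ⟨hTx, hTy, hTcomp, hTmem⟩ | ⟨hTy, hTx, hTcomp, hTmem⟩
    · -- both `x`-oriented: S = T, contradiction
      exfalso
      have hNST : NS = NT := NHypergraph.comp_unique hScomp hTcomp
        ⟨x, Finset.mem_inter.mpr ⟨hSmem, hTmem⟩⟩
      exact hne (hSc.nestSet_injective T hTc (by rw [hSset, hTset, hNST]))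
    · -- S is `x`-oriented, T is `y`-oriented
      refine key_ne μ hxy hμxy hxv hyv hWsat hxWx hyWx hScomp hSmem hTcomp hTmem
        hSx hSy hTx hTy ?_
      intro w hw hwx hwy
      simp only [coordVec]
      rw [suppAt_agree hSc hsingS hTc hsingT hSset hTset hxv hyv hw hwx hwy hSx hTy]
  · rcases covered_dichotomy hVc hTc hsingT hxy hWxn hxWx hyWx hWmin hNTmem hVT with
      ⟨hTx, hTy, hTcomp, hTmem⟩ | ⟨hTy, hTx, hTcomp, hTmem⟩
    · -- S is `y`-oriented, T is `x`-oriented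
      refine key_ne μ hxy.symm hμxy.symm hyv hxv hWsat hyWx hxWx hScomp hSmem hTcomp hTmem
        hSy hSx hTy hTx ?_
      intro w hw hwy hwx
      simp only [coordVec]
      rw [suppAt_agree hSc hsingS hTc hsingT hSset hTset hyv hxv hw hwy hwx hSy hTx]
    · -- both `y`-oriented: S = T, contradiction
      exfalso
      have hNST : NS = NT := NHypergraph.comp_unique hScomp hTcomp
        ⟨y, Finset.mem_inter.mpr ⟨hSmem, hTmem⟩⟩
      exact hne (hSc.nestSet_injective T hTc (by rw [hSset, hTset, hNST]))

end
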